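/- Let X be a real Banach space that is an L1-predual, and let x* be an extreme point of the closed unit ball B_{X*} of X*. Then ker(x*) is an M-ideal in X. -/

import Mathlib

open NormedSpace Filter Topology MeasureTheory

set_option maxHeartbeats 1000000

section Helpers

lemma zero_one_ae_const {Ω : Type*} [MeasurableSpace Ω] (ν : Measure Ω)
    (huniv : ν Set.univ = 1)
    (h01 : ∀ S : Set Ω, MeasurableSet S → ν S = 0 ∨ ν S = 1)
    {h : Ω → ℝ} (hh : Measurable h) :
    ∃ c : ℝ, ∀ᵐ ω ∂ν, h ω = c := by
  have hcompl : ∀ S : Set Ω, MeasurableSet S → ν S = 1 → ν Sᶜ = 0 := by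
    intro S hS h1
    have hadd := measure_add_measure_compl (μ := ν) hS
    rw [huniv, h1] at hadd
    nth_rewrite 2 [show (1 : ENNReal) = 1 + 0 by simp] at hadd
    exact (ENNReal.add_right_inj (by simp)).mp hadd
  set T : Set ℝ := {t | ν {ω | t < h ω} = 0} with hT
  have hup : ∀ t ∈ T, ∀ s, t ≤ s → s ∈ T := by
    intro t ht s hts
    exact measure_mono_null (fun ω hω => lt_of_le_of_lt hts hω) ht
  have hmeaslt : ∀ t : ℝ, MeasurableSet {ω | t < h ω} :=
    fun t => measurableSet_lt measurable_const hh
  have hne : T.Nonempty := by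
    by_contra hc
    rw [Set.not_nonempty_iff_eq_empty] at hc
    have h0 : ∀ n : ℕ, ν {ω | h ω ≤ n} = 0 := by
      intro n
      have h1 : ν {ω | (n:ℝ) < h ω} = 1 := by
        rcases h01 _ (hmeaslt n) with h0 | h1
        · exact absurd (show (n:ℝ) ∈ T from h0) (by simp [hc])
        · exact h1
      have := hcompl _ (hmeaslt n) h1
      simpa [Set.compl_setOf, not_lt] using this
    have hU : ν (⋃ n : ℕ, {ω | h ω ≤ n}) = 0 := measure_iUnion_null h0
    have huniv' : (⋃ n : ℕ, {ω | h ω ≤ n}) = Set.univ := by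
      ext ω; simp only [Set.mem_iUnion, Set.mem_univ, iff_true, Set.mem_setOf_eq]
      exact exists_nat_ge (h ω)
    rw [huniv', huniv] at hU; exact one_ne_zero hU
  have hbdd : BddBelow T := by
    by_contra hc
    have h0 : ∀ n : ℕ, ν {ω | (-(n:ℝ)) < h ω} = 0 := by
      intro n
      obtain ⟨t, ht, hlt⟩ : ∃ t ∈ T, t < -(n:ℝ) := by
        by_contra hc2
        push_neg at hc2
        exact hc ⟨-(n:ℝ), fun t ht => hc2 t ht⟩
      exact hup t ht _ hlt.le
    have hU : ν (⋃ n : ℕ, {ω | (-(n:ℝ)) < h ω}) = 0 := measure_iUnion_null h0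
    have huniv' : (⋃ n : ℕ, {ω | (-(n:ℝ)) < h ω}) = Set.univ := by
      ext ω; simp only [Set.mem_iUnion, Set.mem_univ, iff_true, Set.mem_setOf_eq]
      obtain ⟨n, hn⟩ := exists_nat_ge (-(h ω))
      exact ⟨n + 1, by push_cast; linarith⟩
    rw [huniv', huniv] at hU; exact one_ne_zero hU
  set c := sInf T with hc
  refine ⟨c, ?_⟩
  have hgt : ν {ω | c < h ω} = 0 := by
    have hU : {ω | c < h ω} = ⋃ n : ℕ, {ω | c + 1/(n+1) < h ω} := by
      ext ω
      simp only [Set.mem_iUnion, Set.mem_setOf_eq]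
      constructor
      · intro hω
        obtain ⟨n, hn⟩ := exists_nat_one_div_lt (sub_pos.mpr hω)
        exact ⟨n, by linarith⟩
      · intro ⟨n, hn⟩
        have : (0:ℝ) < 1/(n+1) := by positivity
        linarith
    rw [hU]
    refine measure_iUnion_null fun n => ?_
    have hlt : c < c + 1/(n+1) := by
      have : (0:ℝ) < 1/(n+1) := by positivity
      linarith
    obtain ⟨t, ht, htlt⟩ := exists_lt_of_csInf_lt hne hlt
    exact hup t ht _ htlt.le
  have hlt : ν {ω | h ω < c} = 0 := by
    have hU : {ω | h ω < c} = ⋃ n : ℕ, {ω | h ω ≤ c - 1/(n+1)} := by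
      ext ω
      simp only [Set.mem_iUnion, Set.mem_setOf_eq]
      constructor
      · intro hω
        obtain ⟨n, hn⟩ := exists_nat_one_div_lt (sub_pos.mpr hω)
        exact ⟨n, by linarith⟩
      · intro ⟨n, hn⟩
        have : (0:ℝ) < 1/(n+1) := by positivity
        linarith
    rw [hU]
    refine measure_iUnion_null fun n => ?_
    have hs : (c - 1/(n+1)) ∉ T := by
      intro hmem
      have := csInf_le hbdd hmem
      have hpos : (0:ℝ) < 1/(n+1) := by positivity
      rw [← hc] at this; linarith
    have h1 : ν {ω | c - 1/(n+1) < h ω} = 1 := by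
      rcases h01 _ (hmeaslt _) with h0 | h1
      · exact absurd h0 hs
      · exact h1
    have := hcompl _ (hmeaslt _) h1
    simpa [Set.compl_setOf, not_lt] using this
  rw [ae_iff]
  refine measure_mono_null (fun ω hω => ?_) (measure_union_null hlt hgt)
  rcases lt_trichotomy (h ω) c with h1 | h2 | h3
  · exact Or.inl h1
  · exact absurd h2 hω
  · exact Or.inr h3

lemma exists_scalar {Ω : Type*} [MeasurableSpace Ω] {μ : Measure Ω}
    {f : Ω → ℝ} (hfm : Measurable f)
    (huniv : μ.withDensity (fun ω => (‖f ω‖₊ : ENNReal)) Set.univ = 1)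
    (h01 : ∀ S : Set Ω, MeasurableSet S →
      μ.withDensity (fun ω => (‖f ω‖₊ : ENNReal)) S = 0 ∨
      μ.withDensity (fun ω => (‖f ω‖₊ : ENNReal)) S = 1)
    {g : Ω → ℝ} (hg : AEMeasurable g μ) :
    ∃ c : ℝ, ∀ᵐ ω ∂μ, f ω ≠ 0 → g ω = c * f ω := by
  set ν := μ.withDensity (fun ω => (‖f ω‖₊ : ENNReal)) with hν
  have hd : Measurable (fun ω => (‖f ω‖₊ : ENNReal)) := hfm.nnnorm.coe_nnreal_ennreal
  set g' := hg.mk g with hg'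
  have hg'm : Measurable g' := hg.measurable_mk
  have hgg' : g =ᵐ[μ] g' := hg.ae_eq_mk
  have hh : Measurable (fun ω => g' ω / f ω) := hg'm.div hfm
  obtain ⟨c, hc⟩ := zero_one_ae_const ν huniv h01 hh
  refine ⟨c, ?_⟩
  rw [hν, ae_withDensity_iff hd] at hc
  filter_upwards [hc, hgg'] with ω h1 h2 h3
  have hne : (‖f ω‖₊ : ENNReal) ≠ 0 := by simp [h3]
  have := h1 hne
  rw [h2]
  rw [div_eq_iff h3] at this
  exact this

lemma zero_one_of_extreme {Ω : Type*} [MeasurableSpace Ω] {μ : Measure Ω}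
    (e : Lp ℝ 1 μ) (he : e ∈ Set.extremePoints ℝ (Metric.closedBall (0 : Lp ℝ 1 μ) 1))
    {f : Ω → ℝ} (hfe : f =ᵐ[μ] ⇑e) (hnorm : ‖e‖ = 1)
    {S : Set Ω} (hS : MeasurableSet S) :
    (∫ ω in S, ‖f ω‖ ∂μ) = 0 ∨ (∫ ω in S, ‖f ω‖ ∂μ) = 1 := by
  have hfi : Integrable f μ := (L1.integrable_coeFn e).congr hfe.symm
  have htot : (∫ ω, ‖f ω‖ ∂μ) = 1 := by
    rw [← hnorm, L1.norm_eq_integral_norm]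
    exact integral_congr_ae (hfe.fun_comp norm)
  have hsum : (∫ ω in S, ‖f ω‖ ∂μ) + (∫ ω in Sᶜ, ‖f ω‖ ∂μ) = 1 := by
    rw [integral_add_compl hS hfi.norm, htot]
  set t := ∫ ω in S, ‖f ω‖ ∂μ with ht
  by_contra hcon
  push_neg at hcon
  obtain ⟨ht0, ht1⟩ := hcon
  have htnn : 0 ≤ t := setIntegral_nonneg hS (fun ω _ => norm_nonneg _)
  have htnn' : 0 ≤ ∫ ω in Sᶜ, ‖f ω‖ ∂μ := setIntegral_nonneg hS.compl (fun ω _ => norm_nonneg _)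
  have htpos : 0 < t := lt_of_le_of_ne htnn (Ne.symm ht0)
  have htlt : t < 1 := by
    rcases lt_or_eq_of_le (show t ≤ 1 by linarith) with h | h
    · exact h
    · exact absurd h ht1
  -- build the two elements
  set a₁ : Ω → ℝ := fun ω => t⁻¹ * S.indicator f ω with ha₁def
  set b₁ : Ω → ℝ := fun ω => (1 - t)⁻¹ * Sᶜ.indicator f ω with hb₁def
  have hai : Integrable a₁ μ := (hfi.indicator hS).const_mul _
  have hbi : Integrable b₁ μ := (hfi.indicator hS.compl).const_mul _
  set a : Lp ℝ 1 μ := hai.toL1 a₁ with hadef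
  set b : Lp ℝ 1 μ := hbi.toL1 b₁ with hbdef
  have hindS : ∀ (U : Set Ω), MeasurableSet U → (∫ ω, ‖U.indicator f ω‖ ∂μ) = ∫ ω in U, ‖f ω‖ ∂μ := by
    intro U hU
    rw [← integral_indicator hU]
    congr 1
    ext ω
    rw [norm_indicator_eq_indicator_norm]
  have hna : ‖a‖ = 1 := by
    rw [hadef, L1.norm_of_fun_eq_integral_norm]
    have : (∫ ω, ‖a₁ ω‖ ∂μ) = t⁻¹ * ∫ ω, ‖S.indicator f ω‖ ∂μ := by
      rw [← integral_const_mul]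
      congr 1; ext ω
      show ‖t⁻¹ * S.indicator f ω‖ = _
      rw [norm_mul, Real.norm_of_nonneg (inv_pos.mpr htpos).le]
    rw [this, hindS S hS, ← ht, inv_mul_cancel₀ (ne_of_gt htpos)]
  have hnb : ‖b‖ = 1 := by
    rw [hbdef, L1.norm_of_fun_eq_integral_norm]
    have h1t : (0:ℝ) < 1 - t := by linarith
    have : (∫ ω, ‖b₁ ω‖ ∂μ) = (1-t)⁻¹ * ∫ ω, ‖Sᶜ.indicator f ω‖ ∂μ := by
      rw [← integral_const_mul]
      congr 1; ext ω
      show ‖(1-t)⁻¹ * Sᶜ.indicator f ω‖ = _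
      rw [norm_mul, Real.norm_of_nonneg (inv_pos.mpr h1t).le]
    rw [this, hindS Sᶜ hS.compl]
    have : (∫ ω in Sᶜ, ‖f ω‖ ∂μ) = 1 - t := by linarith
    rw [this, inv_mul_cancel₀ (by linarith)]
  have hmem : e ∈ openSegment ℝ a b := by
    refine ⟨t, 1 - t, htpos, by linarith, by ring, ?_⟩
    refine (Lp.ext ?_).symm
    have h1 := Lp.coeFn_add (t • a) ((1-t) • b)
    have h2 := Lp.coeFn_smul t a
    have h3 := Lp.coeFn_smul (1-t) b
    have h4 := hai.coeFn_toL1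
    have h5 := hbi.coeFn_toL1
    filter_upwards [h1, h2, h3, h4, h5, hfe] with ω w1 w2 w3 w4 w5 w6
    have w4' : (⇑a : Ω → ℝ) ω = a₁ ω := w4
    have w5' : (⇑b : Ω → ℝ) ω = b₁ ω := w5
    rw [w1]
    simp only [Pi.add_apply, w2, w3, Pi.smul_apply, smul_eq_mul]
    rw [w4', w5']
    show _ = t * (t⁻¹ * S.indicator f ω) + (1 - t) * ((1-t)⁻¹ * Sᶜ.indicator f ω)
    rw [← mul_assoc, ← mul_assoc, mul_inv_cancel₀ (ne_of_gt htpos),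
      mul_inv_cancel₀ (by linarith : (1:ℝ) - t ≠ 0), one_mul, one_mul]
    rw [← w6]
    exact (Set.indicator_self_add_compl_apply S f ω).symm
  have hamem : a ∈ Metric.closedBall (0 : Lp ℝ 1 μ) 1 :=
    mem_closedBall_zero_iff.mpr (le_of_eq hna)
  have hbmem : b ∈ Metric.closedBall (0 : Lp ℝ 1 μ) 1 :=
    mem_closedBall_zero_iff.mpr (le_of_eq hnb)
  have hext := he.2 hamem hbmem hmem
  -- a = e gives contradiction
  have hae : ⇑e =ᵐ[μ] a₁ := by
    rw [← hext]
    exact hai.coeFn_toL1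
  have hzero : (∫ ω in Sᶜ, ‖f ω‖ ∂μ) = 0 := by
    have hfa : ∀ᵐ ω ∂(μ.restrict Sᶜ), ‖f ω‖ = ‖a₁ ω‖ :=
      ae_restrict_of_ae ((hfe.trans hae).fun_comp norm)
    rw [integral_congr_ae hfa]
    have : ∀ ω ∈ Sᶜ, ‖a₁ ω‖ = 0 := by
      intro ω hω
      rw [ha₁def]
      simp [Set.indicator_of_notMem (Set.notMem_of_mem_compl hω) f]
    rw [setIntegral_congr_fun hS.compl (fun ω hω => this ω hω), integral_zero]
  rw [hzero] at hsum
  rw [add_zero] at hsum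
  exact ht1 hsum

lemma eq_smul_of_forall_ker {X : Type*} [NormedAddCommGroup X] [NormedSpace ℝ X]
    (x fd : StrongDual ℝ X) (h : ∀ y ∈ LinearMap.ker (x : X →ₗ[ℝ] ℝ), fd y = 0) : ∃ a : ℝ, fd = a • x := by
  by_cases hx : x = 0
  · refine ⟨0, ?_⟩
    ext y
    have : fd y = 0 := h y (by simp [hx])
    simp [this]
  · obtain ⟨u, hu⟩ : ∃ u, x u ≠ 0 := by
      by_contra hc; push_neg at hc
      exact hx (by ext y; simp [hc])
    refine ⟨fd u / x u, ?_⟩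
    ext y
    have hker : y - (x y / x u) • u ∈ LinearMap.ker (x : X →ₗ[ℝ] ℝ) := by
      rw [LinearMap.mem_ker, ContinuousLinearMap.coe_coe]
      have : x (y - (x y / x u) • u) = x y - (x y / x u) * x u := by
        rw [map_sub, _root_.map_smul]; rfl
      rw [this, div_mul_cancel₀ _ hu, sub_self]
    have h0 := h _ hker
    rw [map_sub, _root_.map_smul] at h0
    have h0' : fd y - (x y / x u) * fd u = 0 := h0
    have : fd y = (fd u / x u) * x y := by
      field_simp at h0' ⊢
      linarith
    simpa [ContinuousLinearMap.smul_apply, smul_eq_mul, mul_comm] using this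

end Helpers

noncomputable section

universe u

/-- A Banach space `X` is an `L¹`-predual if its dual is isometrically isomorphic to
`L¹(μ)` for some measure space `(Ω, Σ, μ)`. -/
def IsL1Predual (X : Type*) [NormedAddCommGroup X] [NormedSpace ℝ X] : Prop :=
  ∃ (Ω : Type u) (_ : MeasurableSpace Ω) (μ : Measure Ω),
    Nonempty (StrongDual ℝ X ≃ₗᵢ[ℝ] Lp ℝ 1 μ)

/-- A closed subspace `Y` of `X` is an `M`-ideal if there is a continuous linear
projection `P` on `X*` with range the annihilator of `Y` such that
`‖f‖ = ‖P f‖ + ‖f - P f‖` for all `f ∈ X*`. -/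
def IsMIdeal {X : Type*} [NormedAddCommGroup X] [NormedSpace ℝ X]
    (Y : Submodule ℝ X) : Prop :=
  IsClosed (Y : Set X) ∧
    ∃ P : StrongDual ℝ X →L[ℝ] StrongDual ℝ X,
      (∀ f, P (P f) = P f) ∧
      Set.range P = {f : StrongDual ℝ X | ∀ y ∈ Y, f y = 0} ∧
      ∀ f : StrongDual ℝ X, ‖f‖ = ‖P f‖ + ‖f - P f‖

/-- If `X` is an `L¹`-predual and `x*` is an extreme point of the
closed unit ball of `X*`, then `ker x*` is an `M`-ideal in `X`. -/
theorem stmt_15 {X : Type*} [NormedAddCommGroup X] [NormedSpace ℝ X] [CompleteSpace X]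
    (hX : IsL1Predual.{u} X) (x : StrongDual ℝ X)
    (hx : x ∈ Set.extremePoints ℝ (Metric.closedBall (0 : StrongDual ℝ X) 1)) :
    IsMIdeal (LinearMap.ker (x : X →ₗ[ℝ] ℝ)) := by
  refine ⟨ContinuousLinearMap.isClosed_ker x, ?_⟩
  by_cases hone : ‖x‖ = 1
  swap
  · -- trivial case : the dual is trivial
    have hxle : ‖x‖ ≤ 1 := mem_closedBall_zero_iff.mp hx.1
    have hxlt : ‖x‖ < 1 := lt_of_le_of_ne hxle hone
    have hx0 : x = 0 := by
      by_contra hx0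
      have hnx : 0 < ‖x‖ := norm_pos_iff.mpr hx0
      set δ : ℝ := (1 - ‖x‖) / ‖x‖ with hδ
      have hδpos : 0 < δ := div_pos (by linarith) hnx
      have h1 : (1 + δ) * ‖x‖ = 1 := by
        rw [hδ]; field_simp; ring
      have ha : (1 + δ) • x ∈ Metric.closedBall (0 : StrongDual ℝ X) 1 := by
        rw [mem_closedBall_zero_iff, norm_smul, Real.norm_of_nonneg (by linarith), h1]
      have hb : (1 - δ) • x ∈ Metric.closedBall (0 : StrongDual ℝ X) 1 := by
        rw [mem_closedBall_zero_iff, norm_smul]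
        have : ‖(1 : ℝ) - δ‖ ≤ 1 + δ := by
          rw [Real.norm_eq_abs, abs_le]; constructor <;> linarith
        calc ‖(1:ℝ) - δ‖ * ‖x‖ ≤ (1 + δ) * ‖x‖ := by
              exact mul_le_mul_of_nonneg_right this (norm_nonneg x)
          _ = 1 := h1
      have hseg : x ∈ openSegment ℝ ((1 + δ) • x) ((1 - δ) • x) := by
        refine ⟨1/2, 1/2, by norm_num, by norm_num, by norm_num, ?_⟩
        rw [smul_smul, smul_smul, ← add_smul]
        rw [show (1:ℝ)/2 * (1 + δ) + 1/2 * (1 - δ) = 1 by ring, one_smul]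
      have hext := hx.2 ha hb hseg
      have : δ • x = 0 := by
        have h2 := hext
        have : (1 + δ) • x - x = 0 := by rw [h2, sub_self]
        rwa [add_smul, one_smul, add_sub_cancel_left] at this
      rcases smul_eq_zero.mp this with h | h
      · exact (ne_of_gt hδpos) h
      · exact hx0 h
    have htriv : ∀ fd : StrongDual ℝ X, fd = 0 := by
      intro fd
      by_contra hfd
      have hnfd : 0 < ‖fd‖ := norm_pos_iff.mpr hfd
      set w : StrongDual ℝ X := ‖fd‖⁻¹ • fd with hw
      have hw1 : ‖w‖ = 1 := by
        rw [hw, norm_smul, Real.norm_of_nonneg (inv_pos.mpr hnfd).le,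
          inv_mul_cancel₀ (ne_of_gt hnfd)]
      have hwm : w ∈ Metric.closedBall (0 : StrongDual ℝ X) 1 :=
        mem_closedBall_zero_iff.mpr hw1.le
      have hwm' : -w ∈ Metric.closedBall (0 : StrongDual ℝ X) 1 :=
        mem_closedBall_zero_iff.mpr (by rw [norm_neg, hw1])
      have hseg : x ∈ openSegment ℝ w (-w) := by
        refine ⟨1/2, 1/2, by norm_num, by norm_num, by norm_num, ?_⟩
        rw [hx0, smul_neg, add_neg_cancel]
      have hext := hx.2 hwm hwm' hseg
      have : w = 0 := hext.trans hx0
      rw [this, norm_zero] at hw1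
      exact zero_ne_one hw1
    refine ⟨0, by simp, ?_, fun f => by simp⟩
    ext fd
    simp only [ContinuousLinearMap.zero_apply, Set.mem_range, Set.mem_setOf_eq]
    constructor
    · rintro ⟨g, rfl⟩ y _
      rfl
    · intro _
      exact ⟨0, (htriv fd).symm⟩
  · -- main case
    obtain ⟨Ω, mΩ, μ, ⟨T⟩⟩ := hX
    set e : Lp ℝ 1 μ := T x with he_def
    have hnorm : ‖e‖ = 1 := by rw [he_def, T.norm_map]; exact hone
    have he : e ∈ Set.extremePoints ℝ (Metric.closedBall (0 : Lp ℝ 1 μ) 1) := by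
      constructor
      · exact mem_closedBall_zero_iff.mpr hnorm.le
      · intro a ha b hb hseg
        obtain ⟨s, t, hs, ht, hst, heq⟩ := hseg
        have hxseg : x ∈ openSegment ℝ (T.symm a) (T.symm b) := by
          refine ⟨s, t, hs, ht, hst, ?_⟩
          have := congrArg T.symm heq
          rw [map_add, LinearIsometryEquiv.map_smul, LinearIsometryEquiv.map_smul] at this
          rw [this, he_def, T.symm_apply_apply]
        have ham : T.symm a ∈ Metric.closedBall (0 : StrongDual ℝ X) 1 := by
          rw [mem_closedBall_zero_iff, T.symm.norm_map]
          exact mem_closedBall_zero_iff.mp ha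
        have hbm : T.symm b ∈ Metric.closedBall (0 : StrongDual ℝ X) 1 := by
          rw [mem_closedBall_zero_iff, T.symm.norm_map]
          exact mem_closedBall_zero_iff.mp hb
        have hext := hx.2 ham hbm hxseg
        rw [← T.apply_symm_apply a, hext, he_def]
    -- measurable representative
    set f : Ω → ℝ := (Lp.aestronglyMeasurable e).mk ⇑e with hf_def
    have hfsm : StronglyMeasurable f := (Lp.aestronglyMeasurable e).stronglyMeasurable_mk
    have hfm : Measurable f := hfsm.measurable
    have hfe : f =ᵐ[μ] ⇑e := (Lp.aestronglyMeasurable e).ae_eq_mk.symm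
    have hfi : Integrable f μ := (L1.integrable_coeFn e).congr hfe.symm
    have htot : (∫ ω, ‖f ω‖ ∂μ) = 1 := by
      rw [← hnorm, L1.norm_eq_integral_norm]
      exact integral_congr_ae (hfe.fun_comp norm)
    -- withDensity facts
    have hν_eq : ∀ S : Set Ω, MeasurableSet S →
        μ.withDensity (fun ω => (‖f ω‖₊ : ENNReal)) S = ENNReal.ofReal (∫ ω in S, ‖f ω‖ ∂μ) := by
      intro S hS
      rw [withDensity_apply _ hS,
        ofReal_integral_eq_lintegral_ofReal hfi.norm.integrableOn
          (ae_of_all _ fun ω => norm_nonneg _)]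
      congr 1
      ext ω
      exact (ofReal_norm (f ω)).symm
    have h01 : ∀ S : Set Ω, MeasurableSet S →
        μ.withDensity (fun ω => (‖f ω‖₊ : ENNReal)) S = 0 ∨
        μ.withDensity (fun ω => (‖f ω‖₊ : ENNReal)) S = 1 := by
      intro S hS
      rw [hν_eq S hS]
      rcases zero_one_of_extreme e he hfe hnorm hS with h | h
      · left; rw [h, ENNReal.ofReal_zero]
      · right; rw [h, ENNReal.ofReal_one]
    have huniv : μ.withDensity (fun ω => (‖f ω‖₊ : ENNReal)) Set.univ = 1 := by
      rw [hν_eq Set.univ MeasurableSet.univ, setIntegral_univ, htot, ENNReal.ofReal_one]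
    -- scalar function
    have spec : ∀ g : Lp ℝ 1 μ, ∃ c : ℝ, ∀ᵐ ω ∂μ, f ω ≠ 0 → (g : Ω → ℝ) ω = c * f ω :=
      fun g => exists_scalar hfm huniv h01 (Lp.aestronglyMeasurable g).aemeasurable
    obtain ⟨cc, hcc⟩ : ∃ cc : Lp ℝ 1 μ → ℝ,
        ∀ g : Lp ℝ 1 μ, ∀ᵐ ω ∂μ, f ω ≠ 0 → (g : Ω → ℝ) ω = cc g * f ω :=
      ⟨fun g => (spec g).choose, fun g => (spec g).choose_spec⟩
    have hA : μ {ω | f ω ≠ 0} ≠ 0 := by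
      intro h0
      have hf0 : f =ᵐ[μ] 0 := by
        rw [Filter.EventuallyEq, ae_iff]
        simpa using h0
      have : e = 0 := Lp.ext (hfe.symm.trans (hf0.trans (Lp.coeFn_zero ℝ 1 μ).symm))
      rw [this, norm_zero] at hnorm
      exact zero_ne_one hnorm
    have huniq : ∀ (g : Lp ℝ 1 μ) (c' : ℝ),
        (∀ᵐ ω ∂μ, f ω ≠ 0 → (g : Ω → ℝ) ω = c' * f ω) → cc g = c' := by
      intro g c' h'
      by_contra hne
      have hsub : {ω | f ω ≠ 0} ⊆
          {ω | ¬((f ω ≠ 0 → (g : Ω → ℝ) ω = cc g * f ω) ∧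
                 (f ω ≠ 0 → (g : Ω → ℝ) ω = c' * f ω))} := by
        intro ω hω hP
        have h1 := hP.1 hω
        have h2 := hP.2 hω
        have : cc g * f ω = c' * f ω := by rw [← h1, h2]
        exact hne (mul_right_cancel₀ hω this)
      have : μ {ω | f ω ≠ 0} = 0 :=
        measure_mono_null hsub (by rw [← ae_iff]; exact (hcc g).and h')
      exact hA this
    -- norm identity
    set A : Set Ω := {ω | f ω ≠ 0} with hA_def
    have hAm : MeasurableSet A := (hfm (measurableSet_singleton 0)).compl
    have hfAc : (∫ ω in Aᶜ, ‖f ω‖ ∂μ) = 0 := by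
      rw [setIntegral_congr_fun hAm.compl
        (fun ω hω => by
          have : f ω = 0 := not_not.mp hω
          simp [this] : Set.EqOn (fun ω => ‖f ω‖) (fun _ => (0:ℝ)) Aᶜ)]
      simp
    have hfA1 : (∫ ω in A, ‖f ω‖ ∂μ) = 1 := by
      have := integral_add_compl hAm hfi.norm
      rw [htot] at this
      linarith [this, hfAc]
    have hnorm_id : ∀ g : Lp ℝ 1 μ, ‖g‖ = |cc g| + ‖g - cc g • e‖ := by
      intro g
      have hgint : Integrable (g : Ω → ℝ) μ := L1.integrable_coeFn g
      have hsint : Integrable (fun ω => (g : Ω → ℝ) ω - cc g * f ω) μ :=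
        hgint.sub (hfi.const_mul _)
      have hgn : ‖g‖ = ∫ ω, ‖(g : Ω → ℝ) ω‖ ∂μ := L1.norm_eq_integral_norm g
      have hsplit : (∫ ω, ‖(g : Ω → ℝ) ω‖ ∂μ)
          = (∫ ω in A, ‖(g : Ω → ℝ) ω‖ ∂μ) + (∫ ω in Aᶜ, ‖(g : Ω → ℝ) ω‖ ∂μ) :=
        (integral_add_compl hAm hgint.norm).symm
      have hgA : (∫ ω in A, ‖(g : Ω → ℝ) ω‖ ∂μ) = |cc g| := by
        have h1 : (∫ ω in A, ‖(g : Ω → ℝ) ω‖ ∂μ) = ∫ ω in A, |cc g| * ‖f ω‖ ∂μ := by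
          refine setIntegral_congr_ae hAm ?_
          filter_upwards [hcc g] with ω h hmem
          rw [h hmem, norm_mul, Real.norm_eq_abs]
        rw [h1, integral_const_mul, hfA1, mul_one]
      have hsub_ae : (((g - cc g • e) : Lp ℝ 1 μ) : Ω → ℝ)
          =ᵐ[μ] fun ω => (g : Ω → ℝ) ω - cc g * f ω := by
        filter_upwards [Lp.coeFn_sub g (cc g • e), Lp.coeFn_smul (cc g) e, hfe]
          with ω w1 w2 w3
        rw [w1, Pi.sub_apply, w2, Pi.smul_apply, smul_eq_mul, ← w3]
      have hsn : ‖g - cc g • e‖ = ∫ ω, ‖(g : Ω → ℝ) ω - cc g * f ω‖ ∂μ := by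
        rw [L1.norm_eq_integral_norm]
        exact integral_congr_ae (hsub_ae.fun_comp norm)
      have hsplit2 : (∫ ω, ‖(g : Ω → ℝ) ω - cc g * f ω‖ ∂μ)
          = (∫ ω in A, ‖(g : Ω → ℝ) ω - cc g * f ω‖ ∂μ)
            + (∫ ω in Aᶜ, ‖(g : Ω → ℝ) ω - cc g * f ω‖ ∂μ) :=
        (integral_add_compl hAm hsint.norm).symm
      have hsA : (∫ ω in A, ‖(g : Ω → ℝ) ω - cc g * f ω‖ ∂μ) = 0 := by
        have : (∫ ω in A, ‖(g : Ω → ℝ) ω - cc g * f ω‖ ∂μ) = ∫ ω in A, (0:ℝ) ∂μ := by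
          refine setIntegral_congr_ae hAm ?_
          filter_upwards [hcc g] with ω h hmem
          rw [h hmem, sub_self, norm_zero]
        rw [this, integral_zero]
      have hsAc : (∫ ω in Aᶜ, ‖(g : Ω → ℝ) ω - cc g * f ω‖ ∂μ)
          = ∫ ω in Aᶜ, ‖(g : Ω → ℝ) ω‖ ∂μ := by
        refine setIntegral_congr_fun hAm.compl (fun ω hω => ?_)
        have : f ω = 0 := not_not.mp hω
        simp [this]
      rw [hgn, hsplit, hgA, hsn, hsplit2, hsA, hsAc, zero_add]
    have hcc_bound : ∀ g : Lp ℝ 1 μ, |cc g| ≤ ‖g‖ := by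
      intro g
      rw [hnorm_id g]
      have := norm_nonneg (g - cc g • e)
      linarith
    have hcc_smul : ∀ (r : ℝ) (g : Lp ℝ 1 μ), cc (r • g) = r * cc g := by
      intro r g
      refine huniq (r • g) (r * cc g) ?_
      filter_upwards [Lp.coeFn_smul r g, hcc g] with ω w1 w2 hmem
      rw [w1, Pi.smul_apply, smul_eq_mul, w2 hmem, mul_assoc]
    have hcc_add : ∀ g h : Lp ℝ 1 μ, cc (g + h) = cc g + cc h := by
      intro g h
      refine huniq (g + h) (cc g + cc h) ?_
      filter_upwards [Lp.coeFn_add g h, hcc g, hcc h] with ω w1 w2 w3 hmem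
      rw [w1, Pi.add_apply, w2 hmem, w3 hmem, add_mul]
    have hcc_e : cc e = 1 := by
      refine huniq e 1 ?_
      filter_upwards [hfe] with ω w1 _
      rw [← w1, one_mul]
    have hcc_smul_e : ∀ r : ℝ, cc (r • e) = r := by
      intro r; rw [hcc_smul, hcc_e, mul_one]
    -- define the projection
    let Pl : StrongDual ℝ X →ₗ[ℝ] StrongDual ℝ X :=
      { toFun := fun fd => cc (T fd) • x
        map_add' := fun fd gd => by
          show cc (T (fd + gd)) • x = cc (T fd) • x + cc (T gd) • x
          rw [T.map_add, hcc_add, add_smul]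
        map_smul' := fun r fd => by
          show cc (T (r • fd)) • x = r • (cc (T fd) • x)
          rw [T.map_smul, hcc_smul, mul_smul] }
    have hPl_bound : ∀ fd : StrongDual ℝ X, ‖Pl fd‖ ≤ 1 * ‖fd‖ := by
      intro fd
      rw [one_mul]
      show ‖cc (T fd) • x‖ ≤ ‖fd‖
      rw [norm_smul, Real.norm_eq_abs, hone, mul_one]
      calc |cc (T fd)| ≤ ‖T fd‖ := hcc_bound _
        _ = ‖fd‖ := T.norm_map fd
    let P : StrongDual ℝ X →L[ℝ] StrongDual ℝ X := Pl.mkContinuous 1 hPl_bound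
    have hP_apply : ∀ fd : StrongDual ℝ X, P fd = cc (T fd) • x := fun fd => rfl
    have hTP : ∀ fd : StrongDual ℝ X, T (P fd) = cc (T fd) • e := by
      intro fd
      rw [hP_apply, T.map_smul, he_def]
    refine ⟨P, ?_, ?_, ?_⟩
    · intro fd
      rw [hP_apply (P fd), hTP, hcc_smul_e, hP_apply]
    · ext fd
      simp only [Set.mem_range, Set.mem_setOf_eq]
      constructor
      · rintro ⟨g, rfl⟩ y hy
        rw [hP_apply]
        have hy0 : x y = 0 := hy
        simp [ContinuousLinearMap.smul_apply, hy0]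
      · intro hfd
        obtain ⟨a, rfl⟩ := eq_smul_of_forall_ker x fd hfd
        refine ⟨a • x, ?_⟩
        rw [hP_apply, T.map_smul, ← he_def, hcc_smul_e]
    · intro fd
      have h1 : ‖fd‖ = ‖T fd‖ := (T.norm_map fd).symm
      have h2 : ‖P fd‖ = |cc (T fd)| := by
        rw [hP_apply, norm_smul, Real.norm_eq_abs, hone, mul_one]
      have h3 : ‖fd - P fd‖ = ‖T fd - cc (T fd) • e‖ := by
        rw [← T.norm_map (fd - P fd), map_sub, hTP]
      rw [h1, h2, h3, hnorm_id (T fd)]
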